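/- Let H be a full-rank (n−k)×n matrix over L = F_{q^m} all of whose entries lie in an F_q-subspace F of L with dim_{F_q} F = d, let R be an (n−k)×t matrix over L, let P be an invertible (n+t)×(n+t) matrix with entries in F_q, and let Q be an invertible (n−k)×(n−k) matrix over L. Let H_pub = Q·[H | R]·P and let C_pub = {c ∈ L^{n+t} : H_pub·cᵀ = 0}. Let F′ ⊆ F be an F_q-subspace of dimension 2 and set C′_pub = {c ∈ C_pub : c_i ∈ F′ for all i ∈ {1,…,n+t}}. If n = (n−k)·d, then C′_pub is an F_q-subspace of L^{n+t} of F_q-dimension at least n/d. -/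

import Mathlib

open Module Pointwise

section Aux

variable {Fq L : Type*} [Field Fq] [Field L] [Algebra Fq L] [FiniteDimensional Fq L]

/-- key dimension bound: `dim (F'·F) ≤ 2 dim F − 1` when `F' ≤ F` has dimension 2. -/
lemma aux_finrank_mul_le (F F' : Submodule Fq L) (hF'F : F' ≤ F)
    (hF'2 : Module.finrank Fq ↥F' = 2) :
    Module.finrank Fq ↥(F' * F) + 1 ≤ 2 * Module.finrank Fq ↥F := by
  classical
  let b := Module.finBasisOfFinrankEq Fq ↥F' hF'2
  set f1 : L := (b 0 : L) with hf1def
  set f2 : L := (b 1 : L) with hf2def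
  have hf1 : f1 ∈ F' := (b 0).2
  have hf2 : f2 ∈ F' := (b 1).2
  have hf1ne : f1 ≠ 0 := by
    simpa [hf1def, Submodule.coe_eq_zero] using b.ne_zero 0
  have hf2ne : f2 ≠ 0 := by
    simpa [hf2def, Submodule.coe_eq_zero] using b.ne_zero 1
  have hspan : F' = Submodule.span Fq {f1, f2} := by
    apply le_antisymm
    · intro x hx
      have h1 : (⟨x, hx⟩ : ↥F') ∈ Submodule.span Fq (Set.range b) := by
        rw [b.span_eq]; trivial
      have h2 := Submodule.mem_map_of_mem (f := F'.subtype) h1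
      rw [Submodule.map_span] at h2
      refine Submodule.span_mono ?_ h2
      rintro _ ⟨_, ⟨i, rfl⟩, rfl⟩
      fin_cases i <;> simp [hf1def, hf2def]
    · rw [Submodule.span_le]
      rintro x hx
      simp only [Set.mem_insert_iff, Set.mem_singleton_iff] at hx
      rcases hx with rfl | rfl <;> assumption
  have hW : F' * F = f1 • F ⊔ f2 • F := by
    rw [hspan, show ({f1, f2} : Set L) = insert f1 {f2} from rfl,
      Submodule.span_insert, Submodule.sup_mul, Submodule.span_singleton_mul,
      Submodule.span_singleton_mul]
  have hA : Module.finrank Fq ↥(f1 • F) ≤ Module.finrank Fq ↥F :=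
    Submodule.finrank_map_le _ _
  have hB : Module.finrank Fq ↥(f2 • F) ≤ Module.finrank Fq ↥F :=
    Submodule.finrank_map_le _ _
  have h12A : f1 * f2 ∈ f1 • F := by
    simpa [smul_eq_mul] using Submodule.smul_mem_pointwise_smul f2 f1 F (hF'F hf2)
  have h12B : f1 * f2 ∈ f2 • F := by
    have := Submodule.smul_mem_pointwise_smul f1 f2 F (hF'F hf1)
    simpa [smul_eq_mul, mul_comm f2 f1] using this
  have hAB : 0 < Module.finrank Fq ↥(f1 • F ⊓ f2 • F) := by
    rw [Module.finrank_pos_iff_exists_ne_zero]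
    refine ⟨⟨f1 * f2, Submodule.mem_inf.mpr ⟨h12A, h12B⟩⟩, ?_⟩
    intro h
    exact mul_ne_zero hf1ne hf2ne (congrArg Subtype.val h)
  have hsum := Submodule.finrank_sup_add_finrank_inf_eq (f1 • F) (f2 • F)
  rw [hW]
  omega

end Aux

/-- extension by zero on the extra `t` coordinates, as an `Fq`-linear map. -/
def elimZeroLM (Fq L : Type*) [Semiring Fq] [AddCommMonoid L] [Module Fq L] (n t : ℕ) :
    (Fin n → L) →ₗ[Fq] (Fin (n + t) → L) where
  toFun y i := Sum.elim y 0 (finSumFinEquiv.symm i)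
  map_add' y z := by funext i; cases h : finSumFinEquiv.symm i <;> simp [h]
  map_smul' c y := by funext i; cases h : finSumFinEquiv.symm i <;> simp [h]

@[simp] lemma elimZeroLM_apply {Fq L : Type*} [Semiring Fq] [AddCommMonoid L] [Module Fq L]
    {n t : ℕ} (y : Fin n → L) (i : Fin (n + t)) :
    elimZeroLM Fq L n t y i = Sum.elim y 0 (finSumFinEquiv.symm i) := rfl

/-- the syndrome map as an `Fq`-linear map between products of subspaces. -/
def matVecLM {Fq L : Type*} [Field Fq] [Field L] [Algebra Fq L] {a b : ℕ}
    (A : Matrix (Fin a) (Fin b) L) (V W : Submodule Fq L)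
    (h : ∀ i j (v : L), v ∈ V → A i j * v ∈ W) :
    (Fin b → ↥V) →ₗ[Fq] (Fin a → ↥W) where
  toFun y i := ⟨∑ j, A i j * (y j : L), Submodule.sum_mem _ fun j _ => h i j _ (y j).2⟩
  map_add' y z := by
    funext i; apply Subtype.ext
    simp [mul_add, Finset.sum_add_distrib]
  map_smul' c y := by
    funext i; apply Subtype.ext
    simp [Finset.smul_sum, mul_smul_comm]

@[simp] lemma matVecLM_apply_coe {Fq L : Type*} [Field Fq] [Field L] [Algebra Fq L] {a b : ℕ}
    (A : Matrix (Fin a) (Fin b) L) (V W : Submodule Fq L)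
    (h : ∀ i j (v : L), v ∈ V → A i j * v ∈ W) (y : Fin b → ↥V) (i : Fin a) :
    (matVecLM A V W h y i : L) = ∑ j, A i j * (y j : L) := rfl

/-- The public code of RankSign, built from an augmented LRPC code
with parameters satisfying `n = (n−k)·d`, contains an `F_q`-subspace of codewords
with all coordinates in a 2-dimensional subspace `F' ⊆ F`, of dimension at least `n/d`. -/
theorem stmt_1 {Fq L : Type*} [Field Fq] [Fintype Fq] [Field L] [Algebra Fq L]
    [FiniteDimensional Fq L]
    (n k t d : ℕ) (hkn : k ≤ n)
    (H : Matrix (Fin (n - k)) (Fin n) L)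
    (R : Matrix (Fin (n - k)) (Fin t) L)
    (P : Matrix (Fin (n + t)) (Fin (n + t)) Fq)
    (Q : Matrix (Fin (n - k)) (Fin (n - k)) L)
    (F F' : Submodule Fq L)
    (hHrank : H.rank = n - k)
    (hH : ∀ i j, H i j ∈ F)
    (hFd : Module.finrank Fq ↥F = d)
    (hP : IsUnit P) (hQ : IsUnit Q)
    (hF'F : F' ≤ F) (hF'2 : Module.finrank Fq ↥F' = 2)
    (hnd : n = (n - k) * d)
    (Hpub : Matrix (Fin (n - k)) (Fin (n + t)) L)
    (hHpub : Hpub =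
      Q * (Matrix.fromCols H R).submatrix id finSumFinEquiv.symm
        * P.map (algebraMap Fq L)) :
    ∃ C' : Submodule Fq (Fin (n + t) → L),
      (C' : Set (Fin (n + t) → L)) =
        {c : Fin (n + t) → L | Hpub.mulVec c = 0 ∧ ∀ i, c i ∈ F'} ∧
      n / d ≤ Module.finrank Fq ↥C' := by
  classical
  have hd2 : 2 ≤ d := by
    rw [← hFd, ← hF'2]; exact Submodule.finrank_mono hF'F
  refine ⟨(Submodule.pi Set.univ fun _ => F') ⊓
      (LinearMap.ker ((Matrix.mulVecLin Hpub).restrictScalars Fq)), ?_, ?_⟩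
  · ext c
    simp only [SetLike.mem_coe, Submodule.mem_inf, Submodule.mem_pi, Set.mem_univ,
      forall_true_left, LinearMap.mem_ker, LinearMap.restrictScalars_apply,
      Matrix.mulVecLin_apply, Set.mem_setOf_eq]
    tauto
  · -- dimension bound
    have hd0 : 0 < d := by omega
    have hnd' : n / d = n - k := by
      conv_lhs => rw [hnd]
      exact Nat.mul_div_cancel _ hd0
    rw [hnd']
    set W : Submodule Fq L := F' * F with hWdef
    have hWd : Module.finrank Fq ↥W + 1 ≤ 2 * d := by
      have h := aux_finrank_mul_le F F' hF'F hF'2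
      rw [hFd] at h
      exact h
    set ψ : (Fin n → ↥F') →ₗ[Fq] (Fin (n - k) → ↥W) :=
      matVecLM H F' W (fun i j v hv => by
        have h := Submodule.mul_mem_mul hv (hH i j)
        rw [mul_comm]
        exact h) with hψdef
    have hdom : Module.finrank Fq (Fin n → ↥F') = 2 * n := by
      rw [Module.finrank_pi_fintype]
      simp [hF'2, Finset.sum_const, Finset.card_univ, mul_comm]
    have hcodom : Module.finrank Fq (Fin (n - k) → ↥W)
        = (n - k) * Module.finrank Fq ↥W := by
      rw [Module.finrank_pi_fintype]
      simp [Finset.sum_const, Finset.card_univ]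
    have hrn := LinearMap.finrank_range_add_finrank_ker ψ
    rw [hdom] at hrn
    have hrle : Module.finrank Fq ↥(LinearMap.range ψ) ≤ (n - k) * (2 * d - 1) := by
      refine le_trans (Submodule.finrank_le _) ?_
      rw [hcodom]
      exact Nat.mul_le_mul_left _ (by omega)
    have h2n : 2 * n = (n - k) * (2 * d - 1) + (n - k) := by
      obtain ⟨e, he⟩ : ∃ e, 2 * d = e + 1 := ⟨2 * d - 1, by omega⟩
      have h1 : 2 * n = (n - k) * (2 * d) := by
        conv_lhs => rw [hnd]
        ring
      rw [h1, show 2 * d - 1 = e from by omega, he]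
      ring
    have hker : n - k ≤ Module.finrank Fq ↥(LinearMap.ker ψ) := by
      rw [h2n] at hrn
      set a := (n - k) * (2 * d - 1) with ha
      omega
    -- the invertible change of coordinates over Fq
    obtain ⟨u, hu⟩ := hP
    set P' : Matrix (Fin (n + t)) (Fin (n + t)) Fq := ↑u⁻¹ with hP'def
    have hPP' : P * P' = 1 := by rw [← hu]; exact u.mul_inv
    set Pm := P.map (algebraMap Fq L) with hPmdef
    set P'm := P'.map (algebraMap Fq L) with hP'mdef
    have hPmP'm : Pm * P'm = 1 := by
      rw [hPmdef, hP'mdef, ← Matrix.map_mul, hPP',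
        Matrix.map_one _ (map_zero _) (map_one _)]
    set ι : (Fin n → ↥F') →ₗ[Fq] (Fin n → L) :=
      LinearMap.pi (fun j => F'.subtype ∘ₗ LinearMap.proj j) with hιdef
    set ρ : (Fin (n + t) → L) →ₗ[Fq] (Fin (n + t) → L) :=
      (Matrix.mulVecLin P'm).restrictScalars Fq with hρdef
    set Φ : (Fin n → ↥F') →ₗ[Fq] (Fin (n + t) → L) :=
      ρ ∘ₗ (elimZeroLM Fq L n t) ∘ₗ ι with hΦdef
    have hρleft : ∀ x : Fin (n + t) → L, Pm.mulVec (P'm.mulVec x) = x := fun x => by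
      rw [Matrix.mulVec_mulVec, hPmP'm, Matrix.one_mulVec]
    have hΦapp : ∀ y, Φ y = P'm.mulVec (elimZeroLM Fq L n t (ι y)) := fun y => rfl
    have hΦinj : Function.Injective Φ := by
      intro a b hab
      rw [hΦapp, hΦapp] at hab
      have h2 : elimZeroLM Fq L n t (ι a) = elimZeroLM Fq L n t (ι b) := by
        have h := congrArg (Pm.mulVec) hab
        rwa [hρleft, hρleft] at h
      have h3 : ι a = ι b := by
        funext j
        have h := congrFun h2 (finSumFinEquiv (Sum.inl j))
        simpa using h
      funext j
      exact Subtype.ext (congrFun h3 j)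
    have hιapp : ∀ y j, ι y j = (y j : L) := fun y j => rfl
    have hmem : Submodule.map Φ (LinearMap.ker ψ) ≤
        (Submodule.pi Set.univ fun _ => F') ⊓
          (LinearMap.ker ((Matrix.mulVecLin Hpub).restrictScalars Fq)) := by
      rintro _ ⟨y, hy, rfl⟩
      have hy0 : ψ y = 0 := hy
      have hx0 : H.mulVec (ι y) = 0 := by
        funext i
        have h0 : (ψ y i : L) = 0 := by rw [hy0]; rfl
        rw [hψdef, matVecLM_apply_coe] at h0
        simpa [Matrix.mulVec, dotProduct, hιapp] using h0
      have hxF' : ∀ j, elimZeroLM Fq L n t (ι y) j ∈ F' := by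
        intro j
        rw [elimZeroLM_apply]
        cases h : finSumFinEquiv.symm j with
        | inl a => simp [hιapp, (y a).2]
        | inr a => simp
      rw [Submodule.mem_inf]
      constructor
      · rw [Submodule.mem_pi]
        intro i _
        have h : Φ y i = ∑ j, (P' i j) • (elimZeroLM Fq L n t (ι y) j) := by
          rw [hΦapp]
          simp [Matrix.mulVec, dotProduct, hP'mdef, Matrix.map_apply,
            Algebra.smul_def]
        rw [h]
        exact Submodule.sum_mem _ fun j _ => Submodule.smul_mem _ _ (hxF' j)
      · rw [LinearMap.mem_ker]
        show Hpub.mulVec (Φ y) = 0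
        have hxe : (elimZeroLM Fq L n t (ι y)) ∘ (finSumFinEquiv : Fin n ⊕ Fin t ≃ Fin (n + t))
            = Sum.elim (ι y) 0 := by
          funext s
          simp
        rw [hΦapp]
        calc Hpub.mulVec (P'm.mulVec (elimZeroLM Fq L n t (ι y)))
            = ((Q * (Matrix.fromCols H R).submatrix id ⇑finSumFinEquiv.symm * Pm) * P'm).mulVec
              (elimZeroLM Fq L n t (ι y)) := by
              rw [hHpub, Matrix.mulVec_mulVec]
          _ = (Q * (Matrix.fromCols H R).submatrix id ⇑finSumFinEquiv.symm).mulVec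
              (elimZeroLM Fq L n t (ι y)) := by rw [Matrix.mul_assoc, hPmP'm, Matrix.mul_one]
          _ = Q.mulVec (((Matrix.fromCols H R).submatrix id ⇑finSumFinEquiv.symm).mulVec
              (elimZeroLM Fq L n t (ι y))) := (Matrix.mulVec_mulVec _ _ _).symm
          _ = Q.mulVec (H.mulVec (ι y) + R.mulVec 0) := by
              rw [Matrix.submatrix_mulVec_equiv]
              rw [show ((elimZeroLM Fq L n t (ι y)) ∘ ⇑finSumFinEquiv.symm.symm)
                  = Sum.elim (ι y) 0 by rw [Equiv.symm_symm]; exact hxe]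
              rw [Matrix.fromCols_mulVec_sumElim]
              simp
          _ = 0 := by rw [hx0, Matrix.mulVec_zero, add_zero, Matrix.mulVec_zero]
    have hfr : Module.finrank Fq ↥(Submodule.map Φ (LinearMap.ker ψ))
        = Module.finrank Fq ↥(LinearMap.ker ψ) :=
      ((Submodule.equivMapOfInjective Φ hΦinj (LinearMap.ker ψ)).finrank_eq).symm
    calc n - k ≤ Module.finrank Fq ↥(LinearMap.ker ψ) := hker
      _ = Module.finrank Fq ↥(Submodule.map Φ (LinearMap.ker ψ)) := hfr.symm
      _ ≤ _ := Submodule.finrank_mono hmem
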